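/- Fix an integer n ≥ 3 and a real l satisfying the admissibility condition 2·sin(π/(2n)) < l < 2·sin(π/n), and set x_max := √(1 − l²/(4·sin²(π/n))). Define f(x) := √(1−x²)·sin(n·arcsin(l/(2·√(1−x²)))) for x ∈ [0, x_max]. Then f is well defined (i.e. l/(2·√(1−x²)) ≤ 1 for all x ∈ [0, x_max]), f is strictly decreasing on [0, x_max], f(0) = sin(n·arcsin(l/2)), and f(x_max) = 0. (Thus as the height x of an n-gonal Goldberg dipyramid increases from 0 to x_max, its aperture decreases from sin(n·arcsin(l/2)) to 0; the Goldberg dipyramid is flexible.) -/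

import Mathlib

set_option maxHeartbeats 1000000

open Real

/-- The aperture of an `n`-gonal Goldberg dipyramid with faces congruent to
`Δ(l)`, as a function of its height `x`. -/
noncomputable def aperture (n : ℕ) (l x : ℝ) : ℝ :=
  Real.sqrt (1 - x ^ 2) *
    Real.sin (n * Real.arcsin (l / (2 * Real.sqrt (1 - x ^ 2))))

/-- The maximal height of an `n`-gonal Goldberg dipyramid with faces `Δ(l)`. -/
noncomputable def xMax (n : ℕ) (l : ℝ) : ℝ :=
  Real.sqrt (1 - l ^ 2 / (4 * Real.sin (Real.pi / n) ^ 2))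

/-- `sin (n θ) / sin θ` is strictly decreasing on `[π/(2n), π/n]` for `n ≥ 3`. -/
lemma g_strictAnti (n : ℕ) (hn : 3 ≤ n) :
    StrictAntiOn (fun θ : ℝ => Real.sin (n * θ) / Real.sin θ)
      (Set.Icc (Real.pi / (2 * n)) (Real.pi / n)) := by
  have hn0 : (0:ℝ) < n := by positivity
  have hn3 : (3:ℝ) ≤ n := by exact_mod_cast hn
  have hπ : (0:ℝ) < Real.pi := Real.pi_pos
  -- On the interval, θ ∈ (0, π/2)
  have hmem : ∀ θ ∈ Set.Icc (Real.pi / (2 * n)) (Real.pi / n),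
      0 < θ ∧ θ < Real.pi / 2 := by
    intro θ hθ
    constructor
    · have : 0 < Real.pi / (2 * n) := by positivity
      linarith [hθ.1]
    · have h1 : Real.pi / n ≤ Real.pi / 3 := by
        apply div_le_div_of_nonneg_left hπ.le (by norm_num) hn3
      have : Real.pi / 3 < Real.pi / 2 := by
        apply div_lt_div_of_pos_left hπ (by norm_num) (by norm_num)
      linarith [hθ.2]
  have hsin_ne : ∀ θ ∈ Set.Icc (Real.pi / (2 * n)) (Real.pi / n), Real.sin θ ≠ 0 := by
    intro θ hθ
    obtain ⟨h0, h2⟩ := hmem θ hθ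
    exact ne_of_gt (Real.sin_pos_of_pos_of_lt_pi h0 (by linarith))
  apply strictAntiOn_of_deriv_neg (convex_Icc _ _)
  · exact ContinuousOn.div (by fun_prop) (by fun_prop) hsin_ne
  · intro θ hθ
    rw [interior_Icc] at hθ
    obtain ⟨hθ1, hθ2⟩ := hθ
    have h0 : 0 < θ := lt_trans (by positivity) hθ1
    have hθhalf : θ < Real.pi / 2 := by
      have h1 : Real.pi / n ≤ Real.pi / 3 :=
        div_le_div_of_nonneg_left hπ.le (by norm_num) hn3
      have : Real.pi / 3 < Real.pi / 2 :=
        div_lt_div_of_pos_left hπ (by norm_num) (by norm_num)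
      linarith
    have hs : 0 < Real.sin θ := Real.sin_pos_of_pos_of_lt_pi h0 (by linarith)
    have hc : 0 < Real.cos θ := Real.cos_pos_of_mem_Ioo ⟨by linarith, hθhalf⟩
    have hnθ1 : Real.pi / 2 < n * θ := by
      have := (div_lt_iff₀ (by positivity : (0:ℝ) < 2 * n)).mp hθ1
      nlinarith
    have hnθ2 : (n:ℝ) * θ < Real.pi := by
      have := (lt_div_iff₀ hn0).mp hθ2
      nlinarith
    have hsn : 0 < Real.sin ((n:ℝ) * θ) := Real.sin_pos_of_pos_of_lt_pi (by linarith) hnθ2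
    have hcn : Real.cos ((n:ℝ) * θ) < 0 :=
      Real.cos_neg_of_pi_div_two_lt_of_lt hnθ1 (by linarith)
    -- derivative computation
    have hd1 : HasDerivAt (fun x : ℝ => Real.sin ((n:ℝ) * x)) (Real.cos ((n:ℝ) * θ) * n) θ := by
      have := (Real.hasDerivAt_sin ((n:ℝ) * θ)).comp θ
        (by simpa using (hasDerivAt_id θ).const_mul (n:ℝ))
      exact this
    have hd : HasDerivAt (fun x : ℝ => Real.sin ((n:ℝ) * x) / Real.sin x)
        ((Real.cos ((n:ℝ) * θ) * n * Real.sin θ - Real.sin ((n:ℝ) * θ) * Real.cos θ)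
          / Real.sin θ ^ 2) θ :=
      hd1.div (Real.hasDerivAt_sin θ) (ne_of_gt hs)
    rw [hd.deriv]
    apply div_neg_of_neg_of_pos
    · have h1 : Real.cos ((n:ℝ) * θ) * n * Real.sin θ < 0 := by
        have hns : 0 < (n:ℝ) * Real.sin θ := mul_pos hn0 hs
        nlinarith
      have h2 : 0 < Real.sin ((n:ℝ) * θ) * Real.cos θ := mul_pos hsn hc
      linarith
    · positivity

/-- Goldberg dipyramids are flexible: as the height increases from `0` to
`x_max`, the aperture strictly decreases from `sin (n · arcsin (l/2))` to `0`. -/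
theorem goldberg_dipyramid_flexible (n : ℕ) (hn : 3 ≤ n) (l : ℝ)
    (hl₁ : 2 * Real.sin (Real.pi / (2 * n)) < l)
    (hl₂ : l < 2 * Real.sin (Real.pi / n)) :
    (∀ x ∈ Set.Icc (0:ℝ) (xMax n l), l / (2 * Real.sqrt (1 - x ^ 2)) ≤ 1) ∧
    StrictAntiOn (aperture n l) (Set.Icc 0 (xMax n l)) ∧
    aperture n l 0 = Real.sin (n * Real.arcsin (l / 2)) ∧
    aperture n l (xMax n l) = 0 := by
  have hn0 : (0:ℝ) < n := by positivity
  have hn3 : (3:ℝ) ≤ n := by exact_mod_cast hn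
  have hπ : (0:ℝ) < Real.pi := Real.pi_pos
  have hπn : 0 < Real.pi / n := by positivity
  have hπn3 : Real.pi / n ≤ Real.pi / 3 :=
    div_le_div_of_nonneg_left hπ.le (by norm_num) hn3
  have hπnlt : Real.pi / n < Real.pi / 2 := by
    have : Real.pi / 3 < Real.pi / 2 :=
      div_lt_div_of_pos_left hπ (by norm_num) (by norm_num)
    linarith
  set S := Real.sin (Real.pi / n) with hSdef
  have hS : 0 < S := Real.sin_pos_of_pos_of_lt_pi hπn (by linarith)
  have hS1 : S ≤ 1 := Real.sin_le_one _
  have hl0 : 0 < l := by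
    have h2n : 0 < Real.pi / (2 * n) := by positivity
    have hlt : Real.pi / (2 * n) < Real.pi := by
      rw [div_lt_iff₀ (by positivity)]; nlinarith
    have := Real.sin_pos_of_pos_of_lt_pi h2n hlt
    linarith
  -- K = l / (2 S), the minimal value of √(1-x²)
  set K := l / (2 * S) with hKdef
  have hK0 : 0 < K := by positivity
  have hK1 : K < 1 := by
    rw [hKdef, div_lt_one (by positivity)]; linarith
  have hK2 : 1 - xMax n l ^ 2 = K ^ 2 := by
    have hnn : (0:ℝ) ≤ 1 - l ^ 2 / (4 * S ^ 2) := by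
      have : l ^ 2 / (4 * S ^ 2) ≤ 1 := by
        rw [div_le_one (by positivity)]; nlinarith
      linarith
    rw [xMax, Real.sq_sqrt hnn, hKdef]
    field_simp; ring
  have hxM0 : 0 ≤ xMax n l := Real.sqrt_nonneg _
  -- basic bounds for x in the interval
  have hub : ∀ x ∈ Set.Icc (0:ℝ) (xMax n l),
      K ≤ Real.sqrt (1 - x ^ 2) ∧ Real.sqrt (1 - x ^ 2) ≤ 1 ∧ 0 < 1 - x ^ 2 := by
    intro x hx
    have hx2 : x ^ 2 ≤ xMax n l ^ 2 := by nlinarith [hx.1, hx.2]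
    have h1 : K ^ 2 ≤ 1 - x ^ 2 := by linarith [hK2]
    have h2 : 0 < 1 - x ^ 2 := lt_of_lt_of_le (by positivity) h1
    refine ⟨?_, ?_, h2⟩
    · calc K = Real.sqrt (K ^ 2) := (Real.sqrt_sq hK0.le).symm
        _ ≤ _ := Real.sqrt_le_sqrt h1
    · exact Real.sqrt_le_one.mpr (by nlinarith [hx.1])
  -- s x := l / (2 √(1-x²)) lies in [l/2, S]
  have hs_bound : ∀ x ∈ Set.Icc (0:ℝ) (xMax n l),
      l / 2 ≤ l / (2 * Real.sqrt (1 - x ^ 2)) ∧ l / (2 * Real.sqrt (1 - x ^ 2)) ≤ S := by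
    intro x hx
    obtain ⟨h1, h2, h3⟩ := hub x hx
    have hu0 : 0 < Real.sqrt (1 - x ^ 2) := lt_of_lt_of_le hK0 h1
    constructor
    · apply div_le_div_of_nonneg_left hl0.le (by positivity); linarith
    · have : l / (2 * Real.sqrt (1 - x ^ 2)) ≤ l / (2 * K) :=
        div_le_div_of_nonneg_left hl0.le (by positivity) (by linarith)
      calc l / (2 * Real.sqrt (1 - x ^ 2)) ≤ l / (2 * K) := this
        _ = S := by rw [hKdef]; field_simp
  have part1 : ∀ x ∈ Set.Icc (0:ℝ) (xMax n l), l / (2 * Real.sqrt (1 - x ^ 2)) ≤ 1 :=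
    fun x hx => le_trans (hs_bound x hx).2 hS1
  -- key rewriting: aperture = (l/2) * sin(n θ)/sin θ with θ = arcsin(s x)
  have key : ∀ x ∈ Set.Icc (0:ℝ) (xMax n l),
      aperture n l x = (l / 2) *
        (Real.sin (n * Real.arcsin (l / (2 * Real.sqrt (1 - x ^ 2)))) /
          Real.sin (Real.arcsin (l / (2 * Real.sqrt (1 - x ^ 2))))) := by
    intro x hx
    obtain ⟨hb1, hb2⟩ := hs_bound x hx
    have hu0 : 0 < Real.sqrt (1 - x ^ 2) := lt_of_lt_of_le hK0 (hub x hx).1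
    have hsin : Real.sin (Real.arcsin (l / (2 * Real.sqrt (1 - x ^ 2)))) =
        l / (2 * Real.sqrt (1 - x ^ 2)) :=
      Real.sin_arcsin (by
        have : (0:ℝ) ≤ l / (2 * Real.sqrt (1 - x ^ 2)) := by positivity
        linarith) (le_trans hb2 hS1)
    rw [aperture, hsin]
    field_simp
  -- θ bounds: arcsin (s x) ∈ (π/(2n), π/n]
  have hθmem : ∀ x ∈ Set.Icc (0:ℝ) (xMax n l),
      Real.arcsin (l / (2 * Real.sqrt (1 - x ^ 2))) ∈
        Set.Icc (Real.pi / (2 * n)) (Real.pi / n) := by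
    intro x hx
    obtain ⟨hb1, hb2⟩ := hs_bound x hx
    constructor
    · have h1 : Real.sin (Real.pi / (2 * n)) < l / 2 := by linarith
      have hnn : (0:ℝ) ≤ Real.pi / (2 * n) := by positivity
      have hle : Real.pi / (2 * n) ≤ Real.pi / 2 :=
        div_le_div_of_nonneg_left hπ.le (by norm_num) (by nlinarith)
      have := Real.arcsin_sin (x := Real.pi / (2 * n)) (by linarith) hle
      calc Real.pi / (2 * n) = Real.arcsin (Real.sin (Real.pi / (2 * n))) := this.symm
        _ ≤ Real.arcsin (l / (2 * Real.sqrt (1 - x ^ 2))) :=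
            Real.monotone_arcsin (by linarith)
    · calc Real.arcsin (l / (2 * Real.sqrt (1 - x ^ 2))) ≤ Real.arcsin S :=
          Real.monotone_arcsin hb2
        _ = Real.pi / n := Real.arcsin_sin (by linarith) hπnlt.le
  refine ⟨part1, ?_, ?_, ?_⟩
  · -- strict antitonicity
    intro x₁ hx₁ x₂ hx₂ hlt
    have hu1 := hub x₁ hx₁
    have hu2 := hub x₂ hx₂
    have hsqlt : Real.sqrt (1 - x₂ ^ 2) < Real.sqrt (1 - x₁ ^ 2) := by
      apply Real.sqrt_lt_sqrt hu2.2.2.le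
      nlinarith [hx₁.1, hx₂.1]
    have hslt : l / (2 * Real.sqrt (1 - x₁ ^ 2)) < l / (2 * Real.sqrt (1 - x₂ ^ 2)) := by
      apply div_lt_div_of_pos_left hl0 (by linarith [lt_of_lt_of_le hK0 hu2.1])
      linarith
    have hθlt : Real.arcsin (l / (2 * Real.sqrt (1 - x₁ ^ 2))) <
        Real.arcsin (l / (2 * Real.sqrt (1 - x₂ ^ 2))) := by
      apply Real.strictMonoOn_arcsin
      · constructor
        · have := (hs_bound x₁ hx₁).1; linarith
        · exact part1 x₁ hx₁
      · constructor
        · have := (hs_bound x₂ hx₂).1; linarith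
        · exact part1 x₂ hx₂
      · exact hslt
    rw [key x₁ hx₁, key x₂ hx₂]
    apply mul_lt_mul_of_pos_left _ (by positivity : (0:ℝ) < l / 2)
    exact g_strictAnti n hn (hθmem x₁ hx₁) (hθmem x₂ hx₂) hθlt
  · -- value at 0
    simp [aperture]
  · -- value at xMax
    have hsq : Real.sqrt (1 - xMax n l ^ 2) = K := by
      rw [hK2, Real.sqrt_sq hK0.le]
    have harg : l / (2 * Real.sqrt (1 - xMax n l ^ 2)) = S := by
      rw [hsq, hKdef]; field_simp
    rw [aperture, harg, Real.arcsin_sin (by linarith) hπnlt.le]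
    rw [mul_div_cancel₀ _ (ne_of_gt hn0), Real.sin_pi, mul_zero]
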